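/- Let A = [[1, 1],[0, 1]] and B = [[0, −1],[0, 0]] be 2×2 complex matrices, and let T be the 4×4 complex matrix given in 2×2 block form with zero diagonal blocks, (1,2)-block A, and (2,1)-block B*. Then ‖A + B‖ < 2 w(T) < ‖A‖ + ‖B‖, where ‖·‖ is the operator (spectral) norm and w is the numerical radius. -/

import Mathlib

open scoped Matrix

/-- The numerical radius of a bounded linear operator. -/
noncomputable def numRadius {E : Type*} [NormedAddCommGroup E] [InnerProductSpace ℂ E]
    (T : E →L[ℂ] E) : ℝ :=
  ⨆ x : {x : E // ‖x‖ = 1}, ‖(inner ℂ (T x.val) x.val : ℂ)‖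

/-- The operator norm of a square complex matrix, acting on Euclidean space. -/
noncomputable def matOpNorm {n : Type*} [Fintype n] [DecidableEq n]
    (M : Matrix n n ℂ) : ℝ :=
  ‖(Matrix.toEuclideanCLM (𝕜 := ℂ) M : EuclideanSpace ℂ n →L[ℂ] EuclideanSpace ℂ n)‖

/-- The numerical radius of a square complex matrix, acting on Euclidean space. -/
noncomputable def matNumRadius {n : Type*} [Fintype n] [DecidableEq n]
    (M : Matrix n n ℂ) : ℝ :=
  numRadius (Matrix.toEuclideanCLM (𝕜 := ℂ) M : EuclideanSpace ℂ n →L[ℂ] EuclideanSpace ℂ n)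

namespace Stmt17Aux

lemma numRadius_bddAbove {E : Type*} [NormedAddCommGroup E] [InnerProductSpace ℂ E]
    (T : E →L[ℂ] E) :
    BddAbove (Set.range fun x : {x : E // ‖x‖ = 1} => ‖(inner ℂ (T x.val) x.val : ℂ)‖) := by
  refine ⟨‖T‖, ?_⟩
  rintro r ⟨⟨x, hx⟩, rfl⟩
  calc ‖(inner ℂ (T x) x : ℂ)‖ ≤ ‖T x‖ * ‖x‖ := norm_inner_le_norm _ _
    _ ≤ (‖T‖ * ‖x‖) * ‖x‖ := by
        have := T.le_opNorm x
        nlinarith [norm_nonneg x]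
    _ = ‖T‖ := by rw [hx]; ring

lemma le_numRadius {E : Type*} [NormedAddCommGroup E] [InnerProductSpace ℂ E]
    (T : E →L[ℂ] E) (x : E) (hx : ‖x‖ = 1) :
    ‖(inner ℂ (T x) x : ℂ)‖ ≤ numRadius T :=
  le_ciSup (numRadius_bddAbove T) (⟨x, hx⟩ : {x : E // ‖x‖ = 1})

lemma numRadius_le {E : Type*} [NormedAddCommGroup E] [InnerProductSpace ℂ E]
    (T : E →L[ℂ] E) (x₀ : E) (hx₀ : ‖x₀‖ = 1) (c : ℝ)
    (h : ∀ x : E, ‖x‖ = 1 → ‖(inner ℂ (T x) x : ℂ)‖ ≤ c) :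
    numRadius T ≤ c := by
  have : Nonempty {x : E // ‖x‖ = 1} := ⟨⟨x₀, hx₀⟩⟩
  exact ciSup_le fun x => h x.1 x.2

/-- The witness vector. -/
noncomputable def x₀ : EuclideanSpace ℂ (Fin 2 ⊕ Fin 2) :=
  (WithLp.equiv 2 _).symm
    (Sum.elim ![((Real.sqrt 2 : ℝ) : ℂ)⁻¹, 0] ![0, Complex.I * ((Real.sqrt 2 : ℝ) : ℂ)⁻¹])

lemma norm_x₀ : ‖x₀‖ = 1 := by
  rw [EuclideanSpace.norm_eq, Fintype.sum_sum_type]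
  simp [x₀, Fin.sum_univ_two, norm_inv, Complex.norm_real]
  norm_num

lemma inner_x₀ (A B : Matrix (Fin 2) (Fin 2) ℂ)
    (hA : A = !![1, 1; 0, 1]) (hB : B = !![0, -1; 0, 0])
    (T : Matrix (Fin 2 ⊕ Fin 2) (Fin 2 ⊕ Fin 2) ℂ)
    (hT : T = Matrix.fromBlocks 0 A Bᴴ 0) :
    ‖(inner ℂ ((Matrix.toEuclideanCLM (𝕜 := ℂ) T) x₀) x₀ : ℂ)‖ = 1 := by
  have h2 : ((Real.sqrt 2 : ℝ) : ℂ) * ((Real.sqrt 2 : ℝ) : ℂ) = 2 := by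
    rw [← Complex.ofReal_mul, Real.mul_self_sqrt (by norm_num)]
    norm_num
  have h2' : ((Real.sqrt 2 : ℝ) : ℂ) ^ 2 = 2 := by rw [sq, h2]
  have h0 : ((Real.sqrt 2 : ℝ) : ℂ) ≠ 0 := by
    intro h
    simp only [Complex.ofReal_eq_zero] at h
    exact absurd h (by positivity)
  have hval : (inner ℂ ((Matrix.toEuclideanCLM (𝕜 := ℂ) T) x₀) x₀ : ℂ) = -Complex.I := by
    have hinner : (inner ℂ ((Matrix.toEuclideanCLM (𝕜 := ℂ) T) x₀) x₀ : ℂ)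
        = ∑ i, (starRingEnd ℂ) ((Matrix.toEuclideanCLM (𝕜 := ℂ) T) x₀ i) * x₀ i := by
      simp [PiLp.inner_apply, RCLike.inner_apply, mul_comm]
    rw [hinner]
    simp only [hT, hA, hB, Fintype.sum_sum_type, Fin.sum_univ_two]
    simp [x₀, Matrix.fromBlocks, Matrix.mulVec, dotProduct, Fintype.sum_sum_type,
      Fin.sum_univ_two, Matrix.conjTranspose_apply, map_mul, map_inv₀, Complex.conj_ofReal]
    field_simp
    ring_nf
    simp only [show ((Real.sqrt 2 : ℝ) : ℂ)^4 = (((Real.sqrt 2 : ℝ) : ℂ)^2)^2 from by ring, h2']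
  rw [hval]
  simp

lemma inner_general (A B : Matrix (Fin 2) (Fin 2) ℂ)
    (hA : A = !![1, 1; 0, 1]) (hB : B = !![0, -1; 0, 0])
    (T : Matrix (Fin 2 ⊕ Fin 2) (Fin 2 ⊕ Fin 2) ℂ)
    (hT : T = Matrix.fromBlocks 0 A Bᴴ 0) (x : EuclideanSpace ℂ (Fin 2 ⊕ Fin 2)) :
    (inner ℂ ((Matrix.toEuclideanCLM (𝕜 := ℂ) T) x) x : ℂ)
      = (starRingEnd ℂ) (x (Sum.inr 0)) * x (Sum.inl 0)
        + (starRingEnd ℂ) (x (Sum.inr 1)) * x (Sum.inl 0)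
        + (starRingEnd ℂ) (x (Sum.inr 1)) * x (Sum.inl 1)
        - (starRingEnd ℂ) (x (Sum.inl 0)) * x (Sum.inr 1) := by
  have hinner : (inner ℂ ((Matrix.toEuclideanCLM (𝕜 := ℂ) T) x) x : ℂ)
      = ∑ i, (starRingEnd ℂ) ((Matrix.toEuclideanCLM (𝕜 := ℂ) T) x i) * x i := by
    simp [PiLp.inner_apply, RCLike.inner_apply, mul_comm]
  have happ : ∀ i, (Matrix.toEuclideanCLM (𝕜 := ℂ) T) x i = ∑ j, T i j * x j := fun i => rfl
  rw [hinner]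
  simp only [happ]
  simp only [hT, hA, hB, Fintype.sum_sum_type, Fin.sum_univ_two]
  simp [Matrix.fromBlocks, Matrix.mulVec, dotProduct, Fintype.sum_sum_type,
    Fin.sum_univ_two, Matrix.conjTranspose_apply, map_mul, map_add]
  ring

lemma key_bound (A B : Matrix (Fin 2) (Fin 2) ℂ)
    (hA : A = !![1, 1; 0, 1]) (hB : B = !![0, -1; 0, 0])
    (T : Matrix (Fin 2 ⊕ Fin 2) (Fin 2 ⊕ Fin 2) ℂ)
    (hT : T = Matrix.fromBlocks 0 A Bᴴ 0) (x : EuclideanSpace ℂ (Fin 2 ⊕ Fin 2))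
    (hx : ‖x‖ = 1) :
    ‖(inner ℂ ((Matrix.toEuclideanCLM (𝕜 := ℂ) T) x) x : ℂ)‖ ≤ (1 + Real.sqrt 2) / 2 := by
  set a := x (Sum.inl 0) with ha
  set b := x (Sum.inl 1) with hb'
  set c := x (Sum.inr 0) with hc
  set d := x (Sum.inr 1) with hd
  have hsum : ‖a‖^2 + ‖b‖^2 + ‖c‖^2 + ‖d‖^2 = 1 := by
    have h := hx
    rw [EuclideanSpace.norm_eq, Fintype.sum_sum_type, Fin.sum_univ_two, Fin.sum_univ_two] at h
    have h' := congrArg (· ^ 2) h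
    simp only [one_pow] at h'
    rw [Real.sq_sqrt (by positivity)] at h'
    linarith [h']
  rw [inner_general A B hA hB T hT x]
  have tri : ‖(starRingEnd ℂ) c * a + (starRingEnd ℂ) d * a + (starRingEnd ℂ) d * b
      - (starRingEnd ℂ) a * d‖ ≤ ‖c‖*‖a‖ + ‖d‖*‖a‖ + ‖d‖*‖b‖ + ‖a‖*‖d‖ := by
    calc ‖(starRingEnd ℂ) c * a + (starRingEnd ℂ) d * a + (starRingEnd ℂ) d * b
        - (starRingEnd ℂ) a * d‖
        ≤ ‖(starRingEnd ℂ) c * a + (starRingEnd ℂ) d * a + (starRingEnd ℂ) d * b‖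
            + ‖(starRingEnd ℂ) a * d‖ := norm_sub_le _ _
      _ ≤ ‖(starRingEnd ℂ) c * a + (starRingEnd ℂ) d * a‖ + ‖(starRingEnd ℂ) d * b‖
            + ‖(starRingEnd ℂ) a * d‖ := by gcongr; exact norm_add_le _ _
      _ ≤ ‖(starRingEnd ℂ) c * a‖ + ‖(starRingEnd ℂ) d * a‖ + ‖(starRingEnd ℂ) d * b‖
            + ‖(starRingEnd ℂ) a * d‖ := by gcongr; exact norm_add_le _ _
      _ = ‖c‖*‖a‖ + ‖d‖*‖a‖ + ‖d‖*‖b‖ + ‖a‖*‖d‖ := by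
            simp [norm_mul, RCLike.norm_conj]
  refine tri.trans ?_
  have hs : Real.sqrt 2 ^ 2 = 2 := Real.sq_sqrt (by norm_num)
  have hs0 : 0 ≤ Real.sqrt 2 := Real.sqrt_nonneg 2
  set s := Real.sqrt 2
  set α := ‖a‖; set β := ‖b‖; set γ := ‖c‖; set δ := ‖d‖
  have hα : 0 ≤ α := norm_nonneg _
  have hβ : 0 ≤ β := norm_nonneg _
  have hγ : 0 ≤ γ := norm_nonneg _
  have hδ : 0 ≤ δ := norm_nonneg _
  nlinarith [sq_nonneg (α - δ), sq_nonneg (β - γ), sq_nonneg (α - (1+s)*β),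
    sq_nonneg (α - (1+s)*γ), sq_nonneg (δ - (1+s)*β), sq_nonneg (δ - (1+s)*γ),
    sq_nonneg (α + δ - (1+s)*(β+γ)), sq_nonneg (s*α - δ - γ), sq_nonneg (s*δ - α - β)]

end Stmt17Aux

theorem stmt_17 (A B : Matrix (Fin 2) (Fin 2) ℂ)
    (hA : A = !![1, 1; 0, 1]) (hB : B = !![0, -1; 0, 0])
    (T : Matrix (Fin 2 ⊕ Fin 2) (Fin 2 ⊕ Fin 2) ℂ)
    (hT : T = Matrix.fromBlocks 0 A Bᴴ 0) :
    matOpNorm (A + B) < 2 * matNumRadius T ∧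
      2 * matNumRadius T < matOpNorm A + matOpNorm B := by
  open Stmt17Aux in
  -- `A + B = 1`
  have hAB : A + B = 1 := by
    rw [hA, hB]
    ext i j
    fin_cases i <;> fin_cases j <;> simp [Matrix.one_apply]
  have hABnorm : matOpNorm (A + B) = 1 := by
    rw [hAB]
    unfold matOpNorm
    rw [map_one]
    exact norm_one
  -- lower bound for the numerical radius
  have hlow : 1 ≤ matNumRadius T := by
    have := Stmt17Aux.le_numRadius (Matrix.toEuclideanCLM (𝕜 := ℂ) T) Stmt17Aux.x₀
      Stmt17Aux.norm_x₀
    rw [Stmt17Aux.inner_x₀ A B hA hB T hT] at this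
    exact this
  -- upper bound for the numerical radius
  have hup : matNumRadius T ≤ (1 + Real.sqrt 2) / 2 :=
    Stmt17Aux.numRadius_le _ Stmt17Aux.x₀ Stmt17Aux.norm_x₀ _
      (fun x hx => Stmt17Aux.key_bound A B hA hB T hT x hx)
  -- lower bound for ‖A‖
  have hs2 : Real.sqrt 2 ^ 2 = 2 := Real.sq_sqrt (by norm_num)
  have hs5 : Real.sqrt 5 ^ 2 = 5 := Real.sq_sqrt (by norm_num)
  have hs20 : 0 ≤ Real.sqrt 2 := Real.sqrt_nonneg 2
  have hs50 : 0 ≤ Real.sqrt 5 := Real.sqrt_nonneg 5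
  have hAnorm : Real.sqrt 5 ≤ matOpNorm A * Real.sqrt 2 := by
    set v : EuclideanSpace ℂ (Fin 2) := (WithLp.equiv 2 _).symm ![1, 1] with hv
    have hvnorm : ‖v‖ = Real.sqrt 2 := by
      rw [EuclideanSpace.norm_eq]
      simp [hv, Fin.sum_univ_two]
      norm_num
    have hAv : ‖(Matrix.toEuclideanCLM (𝕜 := ℂ) A) v‖ = Real.sqrt 5 := by
      rw [EuclideanSpace.norm_eq]
      have : ∀ i, (Matrix.toEuclideanCLM (𝕜 := ℂ) A) v i = ∑ j, A i j * v j := fun i => rfl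
      simp only [this, hA, Fin.sum_univ_two]
      simp [hv, Fin.sum_univ_two]
      norm_num
    have := (Matrix.toEuclideanCLM (𝕜 := ℂ) A).le_opNorm v
    rw [hAv, hvnorm] at this
    exact this
  have hBnorm : 1 ≤ matOpNorm B := by
    set v : EuclideanSpace ℂ (Fin 2) := (WithLp.equiv 2 _).symm ![0, 1] with hv
    have hvnorm : ‖v‖ = 1 := by
      rw [EuclideanSpace.norm_eq]
      simp [hv, Fin.sum_univ_two]
    have hBv : ‖(Matrix.toEuclideanCLM (𝕜 := ℂ) B) v‖ = 1 := by
      rw [EuclideanSpace.norm_eq]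
      have : ∀ i, (Matrix.toEuclideanCLM (𝕜 := ℂ) B) v i = ∑ j, B i j * v j := fun i => rfl
      simp only [this, hB, Fin.sum_univ_two]
      simp [hv, Fin.sum_univ_two]
    have := (Matrix.toEuclideanCLM (𝕜 := ℂ) B).le_opNorm v
    rw [hBv, hvnorm, mul_one] at this
    exact this
  have hA0 : 0 ≤ matOpNorm A := norm_nonneg _
  constructor
  · rw [hABnorm]; linarith
  · have h1 : 2 * matNumRadius T ≤ 1 + Real.sqrt 2 := by linarith
    have h2 : Real.sqrt 2 < matOpNorm A := by
      by_contra h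
      push_neg at h
      have h3 : matOpNorm A * Real.sqrt 2 ≤ Real.sqrt 2 * Real.sqrt 2 := by
        exact mul_le_mul_of_nonneg_right h hs20
      have h4 : Real.sqrt 5 ≤ 2 := by nlinarith
      nlinarith
    linarith
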